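/- For every positive integer c, the function g(x) = -x/((1+x)^c - 1) is concave on (0, ∞), i.e., g''(x) ≤ 0 for all x > 0. -/

import Mathlib

open Finset Set

/-- Key algebraic identity: `(y-1) · Σ_{j=1}^{m-1} (y^j - 1)(y^{m-j} - 1)
= (m-1)y^{m+1} - (m+1)y^m + (m+1)y - (m-1)`. -/
lemma geom_ident (m : ℕ) (y : ℝ) :
    (y - 1) * ∑ j ∈ Finset.Ico 1 m, (y ^ j - 1) * (y ^ (m - j) - 1) =
      ((m : ℝ) - 1) * y ^ (m + 1) - ((m : ℝ) + 1) * y ^ m + ((m : ℝ) + 1) * y - ((m : ℝ) - 1) := by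
  rcases Nat.eq_zero_or_pos m with rfl | hm
  · simp; ring
  obtain ⟨n, rfl⟩ : ∃ n, m = n + 1 := ⟨m - 1, by omega⟩
  have h1 : ∀ j ∈ Finset.Ico 1 (n + 1), (y ^ j - 1) * (y ^ (n + 1 - j) - 1)
      = (y ^ (n + 1) + 1) - y ^ j - y ^ (n + 1 - j) := by
    intro j hj
    obtain ⟨hj1, hj2⟩ := Finset.mem_Ico.mp hj
    have hpow : y ^ j * y ^ (n + 1 - j) = y ^ (n + 1) := by
      rw [← pow_add]; congr 1; omega
    nlinarith [hpow]
  have hrefl : ∑ j ∈ Finset.Ico 1 (n + 1), y ^ (n + 1 - j) = ∑ j ∈ Finset.Ico 1 (n + 1), y ^ j := by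
    rw [Finset.sum_Ico_eq_sum_range, Finset.sum_Ico_eq_sum_range]
    rw [← Finset.sum_range_reflect]
    apply Finset.sum_congr rfl
    intro i hi
    have := Finset.mem_range.mp hi
    congr 1
    omega
  have hgeo : (y - 1) * ∑ j ∈ Finset.Ico 1 (n + 1), y ^ j = y ^ (n + 1) - y := by
    have h3 : ∑ j ∈ Finset.Ico 1 (n + 1), y ^ j = (∑ j ∈ Finset.range (n + 1), y ^ j) - 1 := by
      rw [Finset.range_eq_Ico,
        ← Finset.sum_Ico_consecutive _ (by omega : 0 ≤ 1) (by omega : 1 ≤ n + 1)]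
      simp
    rw [h3]
    have h4 := geom_sum_mul y (n + 1)
    linear_combination h4
  rw [Finset.sum_congr rfl h1, Finset.sum_sub_distrib, Finset.sum_sub_distrib,
    Finset.sum_const, Nat.card_Ico, hrefl]
  simp only [Nat.add_sub_cancel, nsmul_eq_mul]
  push_cast
  linear_combination (-2 : ℝ) * hgeo

/-- The numerator of the second derivative of `-x/((1+x)^c - 1)` is nonpositive. -/
lemma num_nonpos (c : ℕ) (hc : 1 ≤ c) (x : ℝ) (hx : 0 < x) :
    x * ((c : ℝ) * (((c - 1 : ℕ) : ℝ) * (1 + x) ^ (c - 1 - 1))) * ((1 + x) ^ c - 1) ^ 2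
      - (x * ((c : ℝ) * (1 + x) ^ (c - 1)) - ((1 + x) ^ c - 1))
        * (2 * ((1 + x) ^ c - 1) * ((c : ℝ) * (1 + x) ^ (c - 1))) ≤ 0 := by
  rcases Nat.lt_or_ge c 2 with h2 | h2
  · have : c = 1 := by omega
    subst this
    norm_num
  obtain ⟨k, rfl⟩ : ∃ k, c = k + 2 := ⟨c - 2, by omega⟩
  simp only [show k + 2 - 1 = k + 1 by omega, show k + 1 - 1 = k by omega]
  set y : ℝ := 1 + x with hy0
  have hy : (1 : ℝ) ≤ y := by rw [hy0]; linarith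
  have hx' : x = y - 1 := by rw [hy0]; ring
  set S : ℝ := ∑ j ∈ Finset.Ico 1 (k + 2), (y ^ j - 1) * (y ^ (k + 2 - j) - 1) with hS
  have hK := geom_ident (k + 2) y
  have hSnn : 0 ≤ S := by
    rw [hS]
    apply Finset.sum_nonneg
    intro j _
    have h1 : (1 : ℝ) ≤ y ^ j := one_le_pow₀ hy
    have h2 : (1 : ℝ) ≤ y ^ (k + 2 - j) := one_le_pow₀ hy
    nlinarith
  have hD : (0 : ℝ) ≤ y ^ (k + 2) - 1 := by
    have : (1 : ℝ) ≤ y ^ (k + 2) := one_le_pow₀ hy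
    linarith
  have hid : x * ((k + 2 : ℕ) : ℝ) * (((k + 1 : ℕ) : ℝ) * y ^ k) * ((y ^ (k + 2) - 1) ^ 2)
      - (x * (((k + 2 : ℕ) : ℝ) * y ^ (k + 1)) - (y ^ (k + 2) - 1))
        * (2 * (y ^ (k + 2) - 1) * (((k + 2 : ℕ) : ℝ) * y ^ (k + 1)))
      = -(((k : ℝ) + 2) * y ^ k * ((y - 1) * S) * (y ^ (k + 2) - 1)) := by
    rw [hK, hx']
    push_cast
    ring
  push_cast at hid ⊢
  have hy' : (0 : ℝ) ≤ y - 1 := by linarith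
  have hyk : (0 : ℝ) ≤ y ^ k := by positivity
  have hnn : 0 ≤ ((k : ℝ) + 2) * y ^ k * ((y - 1) * S) * (y ^ (k + 2) - 1) := by
    apply mul_nonneg (mul_nonneg (mul_nonneg (by positivity) hyk) (mul_nonneg hy' hSnn)) hD
  linarith [hid, hnn]

theorem neg_x_div_pow_sub_one_concave (c : ℕ) (hc : 1 ≤ c) :
    ConcaveOn ℝ (Set.Ioi (0 : ℝ)) (fun x : ℝ => -x / ((1 + x) ^ c - 1)) := by
  have hden : ∀ x : ℝ, x ∈ Set.Ioi (0 : ℝ) → 0 < (1 + x) ^ c - 1 := by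
    intro x hx
    have hx' : (0 : ℝ) < x := hx
    have h1 : (1 : ℝ) < (1 + x) ^ c := one_lt_pow₀ (by linarith) (by omega)
    linarith
  refine concaveOn_of_hasDerivWithinAt2_nonpos (convex_Ioi 0)
    (f' := fun x => (x * ((c : ℝ) * (1 + x) ^ (c - 1)) - ((1 + x) ^ c - 1)) / ((1 + x) ^ c - 1) ^ 2)
    (f'' := fun x =>
      (x * ((c : ℝ) * (((c - 1 : ℕ) : ℝ) * (1 + x) ^ (c - 1 - 1))) * ((1 + x) ^ c - 1) ^ 2
        - (x * ((c : ℝ) * (1 + x) ^ (c - 1)) - ((1 + x) ^ c - 1))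
          * (2 * ((1 + x) ^ c - 1) * ((c : ℝ) * (1 + x) ^ (c - 1))))
        / (((1 + x) ^ c - 1) ^ 2) ^ 2)
    ?_ ?_ ?_ ?_
  · apply ContinuousOn.div (by fun_prop) (by fun_prop)
    intro x hx
    exact ne_of_gt (hden x hx)
  · rw [interior_Ioi]
    intro x hx
    have hv : HasDerivAt (fun x : ℝ => (1 + x) ^ c - 1) ((c : ℝ) * (1 + x) ^ (c - 1)) x := by
      simpa using (((hasDerivAt_id x).const_add (1 : ℝ)).pow c).sub_const 1
    have hu : HasDerivAt (fun x : ℝ => -x) (-1 : ℝ) x := by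
      exact hasDerivAt_neg' x
    have h := hu.div hv (ne_of_gt (hden x hx))
    apply HasDerivAt.hasDerivWithinAt
    convert h using 1
    · rfl
    · rfl
    first
    | (field_simp; ring)
    | field_simp
    | ring
  · rw [interior_Ioi]
    intro x hx
    have hv : HasDerivAt (fun x : ℝ => (1 + x) ^ c - 1) ((c : ℝ) * (1 + x) ^ (c - 1)) x := by
      simpa using (((hasDerivAt_id x).const_add (1 : ℝ)).pow c).sub_const 1
    have hv1 : HasDerivAt (fun x : ℝ => (c : ℝ) * (1 + x) ^ (c - 1))
        ((c : ℝ) * (((c - 1 : ℕ) : ℝ) * (1 + x) ^ (c - 1 - 1))) x := by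
      simpa using (((hasDerivAt_id x).const_add (1 : ℝ)).pow (c - 1)).const_mul (c : ℝ)
    have hnum : HasDerivAt (fun x : ℝ => x * ((c : ℝ) * (1 + x) ^ (c - 1)) - ((1 + x) ^ c - 1))
        (1 * ((c : ℝ) * (1 + x) ^ (c - 1))
          + x * ((c : ℝ) * (((c - 1 : ℕ) : ℝ) * (1 + x) ^ (c - 1 - 1)))
          - (c : ℝ) * (1 + x) ^ (c - 1)) x :=
      ((hasDerivAt_id x).mul hv1).sub hv
    have hden2 : HasDerivAt (fun x : ℝ => ((1 + x) ^ c - 1) ^ 2)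
        ((2 : ℕ) * ((1 + x) ^ c - 1) ^ (2 - 1) * ((c : ℝ) * (1 + x) ^ (c - 1))) x := hv.pow 2
    have hne : ((1 + x) ^ c - 1) ^ 2 ≠ 0 := pow_ne_zero _ (ne_of_gt (hden x hx))
    have h := hnum.div hden2 hne
    apply HasDerivAt.hasDerivWithinAt
    convert h using 1
    · rfl
    · rfl
    congr 1
    rw [show (2:ℕ) - 1 = 1 from rfl, pow_one]
    push_cast
    ring
  · rw [interior_Ioi]
    intro x hx
    apply div_nonpos_of_nonpos_of_nonneg (num_nonpos c hc x hx)
    positivity
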